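/- For all functions F, G : Q³ → ℕ ∪ {#} such that ∑_{q2} F(q1,q2,q3) = ∑_{q4} G(q1,q3,q4) for every q1, q3, there exists H : Q⁴ → ℕ ∪ {#} such that ∑_{q4} H(q1,q2,q3,q4) = F(q1,q2,q3) for all q1,q2,q3 and ∑_{q2} H(q1,q2,q3,q4) = G(q1,q3,q4) for all q1,q3,q4. -/

import Mathlib

/-- ℕ extended with an extra element `#` (represented by `none`),
which is an identity for addition and incomparable with integers. -/
abbrev NS := Option ℕ

def NS.sharp : NS := none

def NS.add : NS → NS → NS
  | none, x => x
  | some a, none => some a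
  | some a, some b => some (a + b)

instance : Add NS := ⟨NS.add⟩
instance : Zero NS := ⟨none⟩

instance : AddCommMonoid NS where
  add_assoc a b c := by
    show NS.add (NS.add a b) c = NS.add a (NS.add b c)
    cases a <;> cases b <;> cases c <;> simp [NS.add, Nat.add_assoc]
  zero_add a := by cases a <;> rfl
  add_zero a := by cases a <;> rfl
  add_comm a b := by
    show NS.add a b = NS.add b a
    cases a <;> cases b <;> simp [NS.add, Nat.add_comm]
  nsmul := nsmulRec

/-- The order on `NS`: `#` is only comparable with `#`. -/
def NS.le : NS → NS → Prop
  | none, none => True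
  | some a, some b => a ≤ b
  | _, _ => False

def NS.lt (x y : NS) : Prop := NS.le x y ∧ x ≠ y

lemma ns_add_def (a b : NS) : a + b = NS.add a b := rfl

/-- A sum in `NS` is `#` iff all summands are `#`; otherwise it is the `some`
of the sum of the underlying naturals. -/
lemma ns_sum_eq {ι : Type*} (s : Finset ι) (x : ι → NS) :
    ∑ i ∈ s, x i =
      if ∀ i ∈ s, x i = none then none else some (∑ i ∈ s, (x i).getD 0) := by
  classical
  induction s using Finset.induction_on with
  | empty => simp; rfl
  | @insert a s ha ih =>
    rw [Finset.sum_insert ha, ih, Finset.sum_insert ha]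
    by_cases h1 : x a = none <;> by_cases h2 : ∀ i ∈ s, x i = none
    · simp [h1, h2, ns_add_def, NS.add]
    · have : ¬ ∀ i ∈ insert a s, x i = none := by
        simp only [Finset.mem_insert]; push_neg at h2 ⊢
        obtain ⟨i, hi, hne⟩ := h2; exact ⟨i, Or.inr hi, hne⟩
      simp [h1, h2, this, ns_add_def, NS.add]
    · obtain ⟨v, hv⟩ := Option.ne_none_iff_exists'.mp h1
      have : ¬ ∀ i ∈ insert a s, x i = none := by
        intro hc; exact h1 (hc a (Finset.mem_insert_self a s))
      have hz : ∑ i ∈ s, (x i).getD 0 = 0 :=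
        Finset.sum_eq_zero fun i hi => by simp [h2 i hi]
      rw [if_pos h2]
      simp [hv, this, ns_add_def, NS.add, hz]
    · obtain ⟨v, hv⟩ := Option.ne_none_iff_exists'.mp h1
      have : ¬ ∀ i ∈ insert a s, x i = none := by
        intro hc; exact h1 (hc a (Finset.mem_insert_self a s))
      simp [hv, h2, this, ns_add_def, NS.add]

/-- Existence of a ℕ-valued matrix with prescribed row and column sums. -/
lemma exists_nat_matrix {Q : Type} [Fintype Q] :
    ∀ (N : ℕ) (f g : Q → ℕ), (∑ i, f i = N) → (∑ j, g j = N) →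
    ∃ M : Q → Q → ℕ, (∀ i, ∑ j, M i j = f i) ∧ (∀ j, ∑ i, M i j = g j) := by
  classical
  intro N
  induction N with
  | zero =>
    intro f g hf hg
    refine ⟨0, fun i => ?_, fun j => ?_⟩
    · simpa using (Finset.sum_eq_zero_iff.mp hf i (Finset.mem_univ i)).symm
    · simpa using (Finset.sum_eq_zero_iff.mp hg j (Finset.mem_univ j)).symm
  | succ N ih =>
    intro f g hf hg
    have ha : ∃ a, 0 < f a := by
      by_contra hc; push_neg at hc
      have : ∑ i, f i = 0 := Finset.sum_eq_zero fun i _ => Nat.le_zero.mp (hc i)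
      omega
    have hb : ∃ b, 0 < g b := by
      by_contra hc; push_neg at hc
      have : ∑ j, g j = 0 := Finset.sum_eq_zero fun j _ => Nat.le_zero.mp (hc j)
      omega
    obtain ⟨a, ha⟩ := ha; obtain ⟨b, hb⟩ := hb
    obtain ⟨M, hM1, hM2⟩ := ih (Function.update f a (f a - 1))
      (Function.update g b (g b - 1))
      (by rw [Finset.sum_update_of_mem (Finset.mem_univ a),
            Finset.sdiff_singleton_eq_erase]
          have := Finset.add_sum_erase Finset.univ f (Finset.mem_univ a)
          omega)
      (by rw [Finset.sum_update_of_mem (Finset.mem_univ b),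
            Finset.sdiff_singleton_eq_erase]
          have := Finset.add_sum_erase Finset.univ g (Finset.mem_univ b)
          omega)
    refine ⟨fun i j => M i j + if i = a ∧ j = b then 1 else 0, fun i => ?_, fun j => ?_⟩
    · rw [Finset.sum_add_distrib, hM1]
      by_cases hia : i = a
      · subst hia
        simp [Function.update_self, Finset.sum_ite_eq']
        omega
      · simp [Function.update_of_ne hia, hia]
    · rw [Finset.sum_add_distrib, hM2]
      by_cases hjb : j = b
      · subst hjb
        simp [Function.update_self, Finset.sum_ite_eq']
        omega
      · simp [Function.update_of_ne hjb, hjb]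

/-- For all `F, G : Q³ → ℕ ∪ {#}` such that
`∑_{q2} F(q1,q2,q3) = ∑_{q4} G(q1,q3,q4)` for every `q1, q3`, there exists
`H : Q⁴ → ℕ ∪ {#}` with `∑_{q4} H(q1,q2,q3,q4) = F(q1,q2,q3)` and
`∑_{q2} H(q1,q2,q3,q4) = G(q1,q3,q4)`. -/
theorem exists_fourway_witness {Q : Type} [Fintype Q]
    (F G : Q → Q → Q → NS)
    (h : ∀ q1 q3, (∑ q2, F q1 q2 q3) = ∑ q4, G q1 q3 q4) :
    ∃ H : Q → Q → Q → Q → NS,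
      (∀ q1 q2 q3, (∑ q4, H q1 q2 q3 q4) = F q1 q2 q3) ∧
      (∀ q1 q3 q4, (∑ q2, H q1 q2 q3 q4) = G q1 q3 q4) := by
  classical
  have key : ∀ q1 q3, ∃ M : Q → Q → ℕ,
      (∀ q2, ∑ q4, M q2 q4 = (F q1 q2 q3).getD 0) ∧
      (∀ q4, ∑ q2, M q2 q4 = (G q1 q3 q4).getD 0) := by
    intro q1 q3
    apply exists_nat_matrix (∑ q2, (F q1 q2 q3).getD 0) _ _ rfl
    have hh := h q1 q3
    rw [ns_sum_eq, ns_sum_eq] at hh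
    by_cases hF : ∀ q2 ∈ (Finset.univ : Finset Q), F q1 q2 q3 = none
      <;> by_cases hG : ∀ q4 ∈ (Finset.univ : Finset Q), G q1 q3 q4 = none
    · rw [Finset.sum_eq_zero fun q4 hq4 => by rw [hG q4 hq4]; rfl,
        Finset.sum_eq_zero fun q2 hq2 => by rw [hF q2 hq2]; rfl]
    · rw [if_pos hF, if_neg hG] at hh; exact nomatch hh
    · rw [if_neg hF, if_pos hG] at hh; exact nomatch hh
    · rw [if_neg hF, if_neg hG] at hh
      exact (Option.some_inj.mp hh).symm
  choose M hM1 hM2 using key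
  refine ⟨fun q1 q2 q3 q4 =>
      if (F q1 q2 q3).isSome ∧ (G q1 q3 q4).isSome
      then some (M q1 q3 q2 q4) else none, ?_, ?_⟩
  · intro q1 q2 q3
    rcases hF : F q1 q2 q3 with _ | a
    · rw [Finset.sum_eq_zero fun q4 _ => by simp [hF]; rfl]; rfl
    · -- some column has a non-# value of G
      have hne : ¬ ∀ q2' ∈ (Finset.univ : Finset Q), F q1 q2' q3 = none := by
        intro hc; exact (by simp [hF] : F q1 q2 q3 ≠ none) (hc q2 (Finset.mem_univ q2))
      have hG : ¬ ∀ q4 ∈ (Finset.univ : Finset Q), G q1 q3 q4 = none := by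
        intro hc
        have hh := h q1 q3
        rw [ns_sum_eq, ns_sum_eq, if_neg hne, if_pos hc] at hh
        exact nomatch hh
      push_neg at hG
      obtain ⟨q4₀, _, hq4₀⟩ := hG
      rw [ns_sum_eq, if_neg]
      · congr 1
        have : ∀ q4 ∈ (Finset.univ : Finset Q),
            ((if (F q1 q2 q3).isSome ∧ (G q1 q3 q4).isSome
              then some (M q1 q3 q2 q4) else none) : NS).getD 0 = M q1 q3 q2 q4 := by
          intro q4 _
          rcases hGq : G q1 q3 q4 with _ | b
          · -- column all zero in M
            have hcol : ∑ q2', M q1 q3 q2' q4 = 0 := by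
              rw [hM2 q1 q3 q4, hGq]; rfl
            have := Finset.sum_eq_zero_iff.mp hcol q2 (Finset.mem_univ q2)
            simp [hGq, this]
          · simp [hF, hGq]
        rw [Finset.sum_congr rfl this, hM1 q1 q3 q2, hF]
        rfl
      · intro hc
        have := hc q4₀ (Finset.mem_univ q4₀)
        simp only [Option.isSome_iff_ne_none] at this
        rw [if_pos ⟨by simp [hF], hq4₀⟩] at this
        exact nomatch this
  · intro q1 q3 q4
    rcases hG : G q1 q3 q4 with _ | b
    · rw [Finset.sum_eq_zero fun q2 _ => by simp [hG]; rfl]; rfl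
    · have hne : ¬ ∀ q4' ∈ (Finset.univ : Finset Q), G q1 q3 q4' = none := by
        intro hc; exact (by simp [hG] : G q1 q3 q4 ≠ none) (hc q4 (Finset.mem_univ q4))
      have hF : ¬ ∀ q2 ∈ (Finset.univ : Finset Q), F q1 q2 q3 = none := by
        intro hc
        have hh := h q1 q3
        rw [ns_sum_eq, ns_sum_eq, if_pos hc, if_neg hne] at hh
        exact nomatch hh
      push_neg at hF
      obtain ⟨q2₀, _, hq2₀⟩ := hF
      rw [ns_sum_eq, if_neg]
      · congr 1
        have : ∀ q2 ∈ (Finset.univ : Finset Q),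
            ((if (F q1 q2 q3).isSome ∧ (G q1 q3 q4).isSome
              then some (M q1 q3 q2 q4) else none) : NS).getD 0 = M q1 q3 q2 q4 := by
          intro q2 _
          rcases hFq : F q1 q2 q3 with _ | a
          · have hrow : ∑ q4', M q1 q3 q2 q4' = 0 := by
              rw [hM1 q1 q3 q2, hFq]; rfl
            have := Finset.sum_eq_zero_iff.mp hrow q4 (Finset.mem_univ q4)
            simp [hFq, this]
          · simp [hFq, hG]
        rw [Finset.sum_congr rfl this, hM2 q1 q3 q4, hG]
        rfl
      · intro hc
        have := hc q2₀ (Finset.mem_univ q2₀)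
        simp only [Option.isSome_iff_ne_none] at this
        rw [if_pos ⟨hq2₀, by simp [hG]⟩] at this
        exact nomatch this
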